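/- Let M be an m×n Boolean matrix of rank r over the reals, and let S be any set of columns of M. Then the number of distinct vectors of the form sumc(A), ranging over all subsets A ⊆ S, is at most (|S|+1)^r. -/

import Mathlib

open scoped Classical

/-- The column-sum of a set `A` of columns of `M`: the vector whose `i`-th
entry is `∑ j ∈ A, M i j`. -/
def sumc {m n : ℕ} (M : Matrix (Fin m) (Fin n) ℝ) (A : Finset (Fin n)) :
    Fin m → ℝ :=
  fun i => ∑ j ∈ A, M i j

/-- For a Boolean matrix `M` of rank `r` and any set `S` of columns, the number
of distinct column-sums of subsets of `S` is at most `(|S| + 1) ^ r`. -/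
theorem card_image_sumc_le {m n : ℕ} (M : Matrix (Fin m) (Fin n) ℝ)
    (hM : ∀ i j, M i j = 0 ∨ M i j = 1) (S : Finset (Fin n)) :
    (S.powerset.image (fun A => sumc M A)).card ≤ (S.card + 1) ^ M.rank := by
  classical
  obtain ⟨t, hts, hspan, hli⟩ := exists_linearIndependent ℝ (Set.range M)
  have htfin : t.Finite := hli.setFinite
  haveI : Fintype t := htfin.fintype
  -- rank = card t
  have hrank : M.rank = Fintype.card t := by
    rw [Matrix.rank_eq_finrank_span_row]
    change Module.finrank ℝ (Submodule.span ℝ (Set.range M)) = _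
    rw [← hspan, finrank_span_set_eq_card hli,
      Set.toFinset_card]
  -- index map: each element of t is a row of M
  have hg : ∀ v : t, ∃ i : Fin m, M i = (v : Fin n → ℝ) := fun v => hts v.2
  choose g hgspec using hg
  -- the values of sumc are naturals ≤ S.card
  have hval : ∀ A ∈ S.powerset, ∀ i, ∃ k : ℕ, k ≤ S.card ∧ sumc M A i = (k : ℝ) := by
    intro A hA i
    rw [Finset.mem_powerset] at hA
    refine ⟨(A.filter fun j => M i j = 1).card, le_trans (Finset.card_le_card
      (Finset.filter_subset _ _)) (Finset.card_le_card hA), ?_⟩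
    rw [sumc]
    rw [Finset.card_filter]
    push_cast
    refine Finset.sum_congr rfl fun j hj => ?_
    rcases hM i j with h | h <;> simp [h]
  -- map into functions t → Fin (S.card + 1)
  set F : (Fin m → ℝ) → (t → Fin (S.card + 1)) :=
    fun u v => ⟨min ⌊u (g v)⌋₊ S.card, Nat.lt_succ_of_le (min_le_right _ _)⟩ with hF
  have hFval : ∀ A ∈ S.powerset, ∀ v : t, ((F (sumc M A) v : ℕ) : ℝ) = sumc M A (g v) := by
    intro A hA v
    obtain ⟨k, hk, hke⟩ := hval A hA (g v)
    simp [hF, hke, Nat.floor_natCast, min_eq_left hk]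
  have key : ∀ u₁ ∈ S.powerset.image (fun A => sumc M A),
      ∀ u₂ ∈ S.powerset.image (fun A => sumc M A), F u₁ = F u₂ → u₁ = u₂ := by
    intro u₁ hu₁ u₂ hu₂ hFeq
    obtain ⟨A, hA, rfl⟩ := Finset.mem_image.mp hu₁
    obtain ⟨B, hB, rfl⟩ := Finset.mem_image.mp hu₂
    -- the two sums agree on every element of t
    have ht : ∀ v : t, ∑ j ∈ A, (v : Fin n → ℝ) j = ∑ j ∈ B, (v : Fin n → ℝ) j := by
      intro v
      have h1 := hFval A hA v
      have h2 := hFval B hB v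
      have h3 : ((F (sumc M A) v : ℕ) : ℝ) = ((F (sumc M B) v : ℕ) : ℝ) := by rw [hFeq]
      have h4 : sumc M A (g v) = sumc M B (g v) := by rw [← h1, ← h2, h3]
      simpa [sumc, hgspec v] using h4
    -- linear functional argument
    set L : (Fin n → ℝ) →ₗ[ℝ] ℝ :=
      (∑ j ∈ A, LinearMap.proj j) - (∑ j ∈ B, LinearMap.proj j) with hL
    have hLt : ∀ v ∈ t, L v = 0 := by
      intro v hv
      have := ht ⟨v, hv⟩
      simp [hL, LinearMap.sub_apply, LinearMap.sum_apply, LinearMap.proj_apply]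
      simpa using sub_eq_zero_of_eq this
    have hker : Submodule.span ℝ (Set.range M) ≤ LinearMap.ker L := by
      rw [← hspan]
      exact Submodule.span_le.mpr fun v hv => hLt v hv
    funext i
    have hrow : (M i : Fin n → ℝ) ∈ Submodule.span ℝ (Set.range M) :=
      Submodule.subset_span ⟨i, rfl⟩
    have := hker hrow
    rw [LinearMap.mem_ker, hL] at this
    simp only [LinearMap.sub_apply, LinearMap.sum_apply, LinearMap.proj_apply,
      sub_eq_zero] at this
    simpa [sumc] using this
  calc (S.powerset.image (fun A => sumc M A)).card
      ≤ (Finset.univ : Finset (t → Fin (S.card + 1))).card :=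
        Finset.card_le_card_of_injOn F (fun u _ => Finset.mem_univ _) key
    _ = (S.card + 1) ^ M.rank := by
        rw [Finset.card_univ, Fintype.card_fun, Fintype.card_fin, hrank]
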